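/- Let C, λ, M, c be positive reals and let u be a real number with |u| ≤ c*M and C*M < 2λ + C*M. Then artanh(C*u / (c*(2λ + C*M))) ≤ (1/2) * log(1 + C*M/λ). -/

import Mathlib

/-- The inverse hyperbolic tangent, defined as the inverse of `Real.tanh`. -/
noncomputable def artanh : ℝ → ℝ := Function.invFun Real.tanh

lemma tanh_eq_exp (x : ℝ) :
    Real.tanh x = (Real.exp (2 * x) - 1) / (Real.exp (2 * x) + 1) := by
  rw [Real.tanh_eq_sinh_div_cosh, Real.sinh_eq, Real.cosh_eq]
  have h1 : Real.exp x > 0 := Real.exp_pos x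
  have h2 : Real.exp (-x) > 0 := Real.exp_pos (-x)
  have h3 : Real.exp (2 * x) = Real.exp x * Real.exp x := by
    rw [← Real.exp_add]; ring_nf
  have h4 : Real.exp x * Real.exp (-x) = 1 := by
    rw [← Real.exp_add]; simp
  field_simp
  have hE : Real.exp (x * 2) = Real.exp x * Real.exp x := by
    rw [← Real.exp_add]; ring_nf
  linear_combination (-2 * Real.exp (-x)) * hE - 2 * Real.exp x * h4

lemma tanh_injective : Function.Injective Real.tanh := by
  intro a b hab
  rw [tanh_eq_exp, tanh_eq_exp] at hab
  have ha : Real.exp (2 * a) > 0 := Real.exp_pos _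
  have hb : Real.exp (2 * b) > 0 := Real.exp_pos _
  have : Real.exp (2 * a) = Real.exp (2 * b) := by
    field_simp at hab
    nlinarith
  have := Real.exp_injective this
  linarith

lemma artanh_eq_half_log (x : ℝ) (h1 : -1 < x) (h2 : x < 1) :
    artanh x = (1 / 2) * Real.log ((1 + x) / (1 - x)) := by
  set y := (1 / 2) * Real.log ((1 + x) / (1 - x)) with hy
  have hr : (0:ℝ) < (1 + x) / (1 - x) := by
    apply div_pos <;> linarith
  have hexp : Real.exp (2 * y) = (1 + x) / (1 - x) := by
    rw [hy]
    rw [show 2 * ((1:ℝ)/2 * Real.log ((1 + x) / (1 - x))) = Real.log ((1+x)/(1-x)) by ring]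
    exact Real.exp_log hr
  have htanh : Real.tanh y = x := by
    rw [tanh_eq_exp, hexp]
    have h1x : (1:ℝ) - x > 0 := by linarith
    field_simp
    ring
  calc artanh x = Function.invFun Real.tanh (Real.tanh y) := by rw [htanh]; rfl
    _ = y := Function.leftInverse_invFun tanh_injective y

theorem artanh_sensitivity_upper_bound
    (C lam M c u : ℝ) (hC : 0 < C) (hlam : 0 < lam) (hM : 0 < M) (hc : 0 < c)
    (hu : |u| ≤ c * M) (hCM : C * M < 2 * lam + C * M) :
    artanh (C * u / (c * (2 * lam + C * M))) ≤ (1 / 2) * Real.log (1 + C * M / lam) := by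
  set D := 2 * lam + C * M with hD
  have hD0 : 0 < D := by nlinarith
  set t := C * u / (c * D) with ht
  have habs : |t| ≤ C * M / D := by
    rw [ht, abs_div, abs_of_pos (by positivity : (0:ℝ) < c * D), abs_mul,
      abs_of_pos hC]
    rw [div_le_div_iff₀ (by positivity) hD0]
    have : C * |u| ≤ C * (c * M) := by nlinarith
    nlinarith
  have hlt1 : C * M / D < 1 := by
    rw [div_lt_one hD0]; linarith
  have ht1 : t < 1 := lt_of_le_of_lt (le_trans (le_abs_self t) habs) hlt1
  have ht2 : -1 < t := by
    have := neg_abs_le t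
    have : -(C * M / D) ≤ t := by linarith [neg_le_neg habs]
    linarith
  rw [artanh_eq_half_log t ht2 ht1]
  have hpos : (0:ℝ) < (1 + t) / (1 - t) := by
    apply div_pos <;> linarith
  have hkey : (1 + t) / (1 - t) ≤ 1 + C * M / lam := by
    rw [div_le_iff₀ (by linarith : (0:ℝ) < 1 - t)]
    have htle : t ≤ C * M / D := le_trans (le_abs_self t) habs
    have htD : t * D ≤ C * M := by
      rw [le_div_iff₀ hD0] at htle; linarith [htle]
    -- (1+t) ≤ (1 + CM/λ)(1-t)  ⟺  t(2λ+CM) ≤ CM·(something)... expand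
    have h2 : (1 + C * M / lam) * (1 - t) - (1 + t)
        = (C * M - t * D) / lam := by
      field_simp [hD]; ring
    have h3 : (0:ℝ) ≤ (C * M - t * D) / lam := by
      apply div_nonneg _ hlam.le; linarith
    linarith [h2 ▸ h3]
  have := Real.log_le_log hpos hkey
  linarith
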